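/- arXiv:2501.07057 — 2 statements merged into one kernel-verified Lean document; each statement's English description precedes it below -/
import Mathlib

section
/- Let Y and Z be independent nonnegative random variables with continuous CDFs F_Y, F_Z. If Y stochastically dominates Z in the first degree, i.e., F_Y(a) ≥ F_Z(a) for all a ≥ 0 with strict inequality at some point a₀ (and hence, by continuity, on an interval around a₀ charged by the law of Z), then P(Y < Z) > 1/2. -/
open MeasureTheory ProbabilityTheory
open scoped ENNReal

theorem stmt2 {Ω : Type*} [MeasurableSpace Ω] (μ : Measure Ω) [IsProbabilityMeasure μ]
    (Y Z : Ω → ℝ) (hYm : Measurable Y) (hZm : Measurable Z)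
    (hYnn : ∀ ω, 0 ≤ Y ω) (hZnn : ∀ ω, 0 ≤ Z ω)
    (hind : IndepFun Y Z μ)
    (FY FZ : ℝ → ℝ)
    (hFY : ∀ a, FY a = (μ {ω | Y ω ≤ a}).toReal)
    (hFZ : ∀ a, FZ a = (μ {ω | Z ω ≤ a}).toReal)
    (hFYc : Continuous FY) (hFZc : Continuous FZ)
    (hdom : ∀ a, 0 ≤ a → FZ a ≤ FY a)
    (hstrict : ∃ a₀, 0 ≤ a₀ ∧ FZ a₀ < FY a₀)
    (hcharge : 0 < μ {ω | FZ (Z ω) < FY (Z ω)}) :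
    1 / 2 < (μ {ω | Y ω < Z ω}).toReal := by
  set κ := μ.map Y with hκ
  set ν := μ.map Z with hν
  have hκp : IsProbabilityMeasure κ := Measure.isProbabilityMeasure_map hYm.aemeasurable
  have hνp : IsProbabilityMeasure ν := Measure.isProbabilityMeasure_map hZm.aemeasurable
  have hκIic : ∀ a, κ (Set.Iic a) = ENNReal.ofReal (FY a) := by
    intro a
    rw [hκ, Measure.map_apply hYm measurableSet_Iic, hFY a,
      ENNReal.ofReal_toReal (measure_ne_top μ _)]
    rfl
  have hνIic : ∀ a, ν (Set.Iic a) = ENNReal.ofReal (FZ a) := by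
    intro a
    rw [hν, Measure.map_apply hZm measurableSet_Iic, hFZ a,
      ENNReal.ofReal_toReal (measure_ne_top μ _)]
    rfl
  -- κ (Iio a) = ofReal (FY a), via continuity of FY
  have hκIio : ∀ a, κ (Set.Iio a) = ENNReal.ofReal (FY a) := by
    intro a
    have hmono : Monotone (fun n : ℕ => Set.Iic (a - 1 / (n + 1 : ℝ))) := by
      intro m n hmn
      apply Set.Iic_subset_Iic.mpr
      have : (1 : ℝ) / (n + 1) ≤ 1 / (m + 1) := by
        apply one_div_le_one_div_of_le (by positivity)
        exact_mod_cast by exact_mod_cast add_le_add_left (Nat.cast_le.mpr hmn) 1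
      linarith
    have hU : Set.Iio a = ⋃ n : ℕ, Set.Iic (a - 1 / (n + 1 : ℝ)) := by
      ext x
      simp only [Set.mem_Iio, Set.mem_iUnion, Set.mem_Iic]
      constructor
      · intro h
        obtain ⟨n, hn⟩ := exists_nat_one_div_lt (sub_pos.mpr h)
        exact ⟨n, by linarith⟩
      · rintro ⟨n, hn⟩
        have : (0 : ℝ) < 1 / (n + 1) := by positivity
        linarith
    have h1 : Filter.Tendsto (fun n : ℕ => κ (Set.Iic (a - 1 / (n + 1 : ℝ))))
        Filter.atTop (nhds (κ (Set.Iio a))) := by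
      rw [hU]; exact tendsto_measure_iUnion_atTop hmono
    have h2 : Filter.Tendsto (fun n : ℕ => κ (Set.Iic (a - 1 / (n + 1 : ℝ))))
        Filter.atTop (nhds (ENNReal.ofReal (FY a))) := by
      simp_rw [hκIic]
      apply (ENNReal.continuous_ofReal.tendsto (FY a)).comp
      have hta : Filter.Tendsto (fun n : ℕ => a - 1 / (n + 1 : ℝ)) Filter.atTop (nhds a) := by
        have := tendsto_one_div_add_atTop_nhds_zero_nat (𝕜 := ℝ)
        simpa using Filter.Tendsto.sub (tendsto_const_nhds (x := a)) this
      exact (hFYc.tendsto a).comp hta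
    exact tendsto_nhds_unique h1 h2
  -- independence: joint law is product
  have hprod : μ.map (fun ω => (Y ω, Z ω)) = κ.prod ν :=
    (indepFun_iff_map_prod_eq_prod_map_map hYm.aemeasurable hZm.aemeasurable).mp hind
  have hltm : MeasurableSet {p : ℝ × ℝ | p.1 < p.2} :=
    measurableSet_lt measurable_fst measurable_snd
  have hA : μ {ω | Y ω < Z ω} = ∫⁻ z, κ (Set.Iio z) ∂ν := by
    calc μ {ω | Y ω < Z ω}
        = μ.map (fun ω => (Y ω, Z ω)) {p : ℝ × ℝ | p.1 < p.2} := by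
          rw [Measure.map_apply (hYm.prodMk hZm) hltm]; rfl
      _ = (κ.prod ν) {p : ℝ × ℝ | p.1 < p.2} := by rw [hprod]
      _ = ∫⁻ z, κ ((fun y => (y, z)) ⁻¹' {p : ℝ × ℝ | p.1 < p.2}) ∂ν :=
          Measure.prod_apply_symm hltm
      _ = ∫⁻ z, κ (Set.Iio z) ∂ν := rfl
  -- symmetry: ∫ ν(Iic z) dν ≥ 1/2
  have hlem : MeasurableSet {p : ℝ × ℝ | p.1 ≤ p.2} :=
    measurableSet_le measurable_fst measurable_snd
  have hgem : MeasurableSet {p : ℝ × ℝ | p.2 ≤ p.1} :=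
    measurableSet_le measurable_snd measurable_fst
  have e1 : (ν.prod ν) {p : ℝ × ℝ | p.1 ≤ p.2} = ∫⁻ z, ν (Set.Iic z) ∂ν := by
    rw [Measure.prod_apply_symm hlem]; rfl
  have e2 : (ν.prod ν) {p : ℝ × ℝ | p.2 ≤ p.1} = (ν.prod ν) {p : ℝ × ℝ | p.1 ≤ p.2} := by
    conv_lhs => rw [← Measure.prod_swap]
    rw [Measure.map_apply measurable_swap hgem]
    rfl
  have hhalf : (1 : ℝ≥0∞) / 2 ≤ ∫⁻ z, ν (Set.Iic z) ∂ν := by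
    by_contra hc
    push_neg at hc
    have hcover : (1 : ℝ≥0∞) ≤ (ν.prod ν) {p : ℝ × ℝ | p.1 ≤ p.2}
        + (ν.prod ν) {p : ℝ × ℝ | p.2 ≤ p.1} := by
      have : (Set.univ : Set (ℝ × ℝ)) ⊆ {p : ℝ × ℝ | p.1 ≤ p.2} ∪ {p : ℝ × ℝ | p.2 ≤ p.1} := by
        intro p _; exact le_total p.1 p.2
      calc (1 : ℝ≥0∞) = (ν.prod ν) Set.univ := by simp
        _ ≤ (ν.prod ν) ({p : ℝ × ℝ | p.1 ≤ p.2} ∪ {p : ℝ × ℝ | p.2 ≤ p.1}) :=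
            measure_mono this
        _ ≤ _ := measure_union_le _ _
    rw [e2, e1] at hcover
    have : (1 : ℝ≥0∞) < 1 := lt_of_le_of_lt hcover
      (by
        have h := ENNReal.add_lt_add hc hc
        rwa [one_div, ENNReal.inv_two_add_inv_two] at h)
    exact absurd this (lt_irrefl _)
  -- pointwise domination everywhere
  have hFZnn : ∀ z, 0 ≤ FZ z := fun z => by rw [hFZ]; exact ENNReal.toReal_nonneg
  have hFYnn : ∀ z, 0 ≤ FY z := fun z => by rw [hFY]; exact ENNReal.toReal_nonneg
  have hFYZ : ∀ z, FZ z ≤ FY z := by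
    intro z
    rcases le_or_gt 0 z with h | h
    · exact hdom z h
    · have he : {ω | Z ω ≤ z} = ∅ := by
        ext ω; simp only [Set.mem_setOf_eq, Set.mem_empty_iff_false, iff_false, not_le]
        linarith [hZnn ω]
      have : FZ z = 0 := by rw [hFZ, he]; simp
      rw [this]; exact hFYnn z
  -- the charged set under ν
  have hSm : MeasurableSet {z : ℝ | FZ z < FY z} :=
    measurableSet_lt hFZc.measurable hFYc.measurable
  have hνS : 0 < ν {z : ℝ | FZ z < FY z} := by
    rw [hν, Measure.map_apply hZm hSm]; exact hcharge
  set S : ℕ → Set ℝ := fun n => {z | FZ z + 1 / (n + 1 : ℝ) ≤ FY z} with hS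
  have hSU : {z : ℝ | FZ z < FY z} = ⋃ n, S n := by
    ext z
    simp only [hS, Set.mem_setOf_eq, Set.mem_iUnion]
    constructor
    · intro h
      obtain ⟨n, hn⟩ := exists_nat_one_div_lt (sub_pos.mpr h)
      exact ⟨n, by linarith⟩
    · rintro ⟨n, hn⟩
      have : (0 : ℝ) < 1 / (n + 1) := by positivity
      linarith
  obtain ⟨n, hn⟩ : ∃ n, 0 < ν (S n) := by
    by_contra h
    push_neg at h
    simp only [le_zero_iff] at h
    have : ν (⋃ n, S n) = 0 := measure_iUnion_null h
    rw [← hSU] at this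
    exact absurd this hνS.ne'
  have hSnm : MeasurableSet (S n) :=
    measurableSet_le (hFZc.measurable.add measurable_const) hFYc.measurable
  -- strict inequality on lintegrals
  have key : (∫⁻ z, ENNReal.ofReal (FZ z) ∂ν) + ENNReal.ofReal (1 / (n + 1 : ℝ)) * ν (S n)
      ≤ ∫⁻ z, ENNReal.ofReal (FY z) ∂ν := by
    have heq : (∫⁻ z, ENNReal.ofReal (FZ z) ∂ν) + ENNReal.ofReal (1 / (n + 1 : ℝ)) * ν (S n)
        = ∫⁻ z, (ENNReal.ofReal (FZ z)
            + (S n).indicator (fun _ => ENNReal.ofReal (1 / (n + 1 : ℝ))) z) ∂ν := by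
      rw [lintegral_add_right _ (measurable_const.indicator hSnm),
        lintegral_indicator hSnm, setLIntegral_const, mul_comm]
    rw [heq]
    apply lintegral_mono
    intro z
    dsimp only
    by_cases hz : z ∈ S n
    · rw [Set.indicator_of_mem hz, ← ENNReal.ofReal_add (hFZnn z) (by positivity)]
      exact ENNReal.ofReal_le_ofReal hz
    · rw [Set.indicator_of_notMem hz, add_zero]
      exact ENNReal.ofReal_le_ofReal (hFYZ z)
  have hε : 0 < ENNReal.ofReal (1 / (n + 1 : ℝ)) * ν (S n) :=
    ENNReal.mul_pos (by simp [ENNReal.ofReal_pos]; positivity) hn.ne'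
  have hB' : (∫⁻ z, ENNReal.ofReal (FZ z) ∂ν) = ∫⁻ z, ν (Set.Iic z) ∂ν :=
    lintegral_congr fun z => (hνIic z).symm
  have hA' : μ {ω | Y ω < Z ω} = ∫⁻ z, ENNReal.ofReal (FY z) ∂ν :=
    hA.trans (lintegral_congr fun z => hκIio z)
  have hμlt : (1 : ℝ≥0∞) / 2 < μ {ω | Y ω < Z ω} := by
    rw [hA']
    calc (1 : ℝ≥0∞) / 2 < (1 : ℝ≥0∞) / 2 + ENNReal.ofReal (1 / (n + 1 : ℝ)) * ν (S n) :=
        ENNReal.lt_add_right (by norm_num) hε.ne'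
      _ ≤ (∫⁻ z, ENNReal.ofReal (FZ z) ∂ν) + ENNReal.ofReal (1 / (n + 1 : ℝ)) * ν (S n) := by
          apply add_le_add_left; rw [hB']; exact hhalf
      _ ≤ _ := key
  have := ENNReal.toReal_strict_mono (measure_ne_top μ _) hμlt
  simpa using this
end

section
/- Under the exponential error trust update with rate η > 0, if the per-event losses ‖Δξ^{(i)}_h‖ are independent over time, bounded in [0, L_max], and there exists ζ > 0 such that E[‖Δξ^{(i)}_{h_Y}‖] + ζ ≤ E[‖Δξ^{(i)}_h‖] for all events i and all h ≠ h_Y, then the normalized trust t^{(i)}_{h_Y} converges to 1 almost surely as i → ∞. -/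
open MeasureTheory ProbabilityTheory Filter

section Aux

lemma exp_quad {x : ℝ} (hx : |x| ≤ 1) : Real.exp x ≤ 1 + x + x ^ 2 := by
  have h := Real.exp_bound hx (by norm_num : 0 < 2)
  have h2 : ∑ i ∈ Finset.range 2, x ^ i / i.factorial = 1 + x := by
    simp [Finset.sum_range_succ]
  have h3 : |x| ^ 2 * ((2 : ℕ).succ / ((2:ℕ).factorial * (2:ℕ))) = x ^ 2 * (3 / 4) := by
    rw [sq_abs]; norm_num [Nat.factorial]
  rw [h2, h3] at h
  have := abs_le.mp h
  nlinarith [sq_nonneg x]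

variable {Ω : Type*} [MeasurableSpace Ω] {μ : Measure Ω} [IsProbabilityMeasure μ]

lemma integrable_of_abs_le {f : Ω → ℝ} (hm : Measurable f) {c : ℝ} (hb : ∀ ω, |f ω| ≤ c) :
    Integrable f μ :=
  (integrable_const c).mono' hm.aestronglyMeasurable (Filter.Eventually.of_forall hb)

lemma mgf_step {Z : Ω → ℝ} (hm : Measurable Z) {c : ℝ} (hb : ∀ ω, |Z ω| ≤ c) (hc : c ≤ 1)
    (h0 : ∫ ω, Z ω ∂μ = 0) : ∫ ω, Real.exp (Z ω) ∂μ ≤ Real.exp (c ^ 2) := by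
  have hc0 : ∀ ω, |Z ω| ≤ 1 := fun ω => (hb ω).trans hc
  have hintZ : Integrable Z μ := integrable_of_abs_le hm hb
  have hintE : Integrable (fun ω => Real.exp (Z ω)) μ := by
    refine integrable_of_abs_le (hm.exp) (c := Real.exp 1) (fun ω => ?_)
    rw [abs_of_pos (Real.exp_pos _)]
    exact Real.exp_le_exp.mpr ((le_abs_self _).trans (hc0 ω))
  have hle : ∀ ω, Real.exp (Z ω) ≤ 1 + Z ω + c ^ 2 := by
    intro ω
    refine (exp_quad (hc0 ω)).trans ?_
    have : Z ω ^ 2 ≤ c ^ 2 := by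
      have := hb ω
      nlinarith [abs_nonneg (Z ω), sq_abs (Z ω)]
    linarith
  calc ∫ ω, Real.exp (Z ω) ∂μ ≤ ∫ ω, (1 + Z ω + c ^ 2) ∂μ := by
        refine integral_mono hintE ?_ hle
        exact (integrable_const (1:ℝ)).add hintZ |>.add (integrable_const _)
    _ = 1 + c ^ 2 := by
        have : Integrable (fun ω => 1 + Z ω) μ := (integrable_const (1:ℝ)).add hintZ
        rw [integral_add this (integrable_const _), integral_add (integrable_const (1:ℝ)) hintZ,
          h0]
        simp
    _ ≤ Real.exp (c ^ 2) := by
        have := Real.add_one_le_exp (c ^ 2); linarith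

lemma integral_prod_range {Y : ℕ → Ω → ℝ} (hm : ∀ n, Measurable (Y n))
    (hind : iIndepFun (m := fun _ => (inferInstance : MeasurableSpace ℝ)) Y μ)
    {C : ℝ} (hC : 0 ≤ C) (hb : ∀ n ω, |Y n ω| ≤ C) (i : ℕ) :
    ∫ ω, ∏ n ∈ Finset.range i, Y n ω ∂μ = ∏ n ∈ Finset.range i, ∫ ω, Y n ω ∂μ := by
  induction i with
  | zero => simp
  | succ i ih =>
    have hprodint : Integrable (fun ω => ∏ n ∈ Finset.range i, Y n ω) μ := by
      refine integrable_of_abs_le (by fun_prop) (c := C ^ i) (fun ω => ?_)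
      calc |∏ n ∈ Finset.range i, Y n ω| = ∏ n ∈ Finset.range i, |Y n ω| := by
            rw [Finset.abs_prod]
        _ ≤ ∏ n ∈ Finset.range i, C := Finset.prod_le_prod (fun n _ => abs_nonneg _)
            (fun n _ => hb n ω)
        _ = C ^ i := by simp
    have hii : IndepFun (∏ j ∈ Finset.range i, Y j) (Y i) μ :=
      hind.indepFun_prod_range_succ hm i
    have heq : (fun ω => ∏ n ∈ Finset.range (i+1), Y n ω) =
        (∏ j ∈ Finset.range i, Y j) * (Y i) := by
      funext ω
      simp [Finset.prod_range_succ, Finset.prod_apply]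
    have heq2 : (fun ω => ∏ n ∈ Finset.range i, Y n ω) = ∏ j ∈ Finset.range i, Y j := by
      funext ω; simp [Finset.prod_apply]
    rw [show (∫ ω, ∏ n ∈ Finset.range (i+1), Y n ω ∂μ) =
        ∫ ω, ((∏ j ∈ Finset.range i, Y j) * Y i) ω ∂μ by rw [← heq],
      hii.integral_mul_eq_mul_integral (heq2 ▸ hprodint).aestronglyMeasurable (integrable_of_abs_le (hm i) (hb i)).aestronglyMeasurable,
      Finset.prod_range_succ, ← ih]
    congr 1
    rw [← heq2]

lemma sum_tendsto_atTop {X : ℕ → Ω → ℝ} (hm : ∀ n, Measurable (X n))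
    (hind : iIndepFun (m := fun _ => (inferInstance : MeasurableSpace ℝ)) X μ)
    {B ζ : ℝ} (hB : 0 < B) (hζ : 0 < ζ)
    (hb : ∀ n ω, |X n ω| ≤ B) (hmean : ∀ n, ζ ≤ ∫ ω, X n ω ∂μ) :
    ∀ᵐ ω ∂μ, Tendsto (fun i => ∑ n ∈ Finset.range i, X n ω) atTop atTop := by
  set m : ℕ → ℝ := fun n => ∫ ω, X n ω ∂μ with hm_def
  have hintX : ∀ n, Integrable (X n) μ := fun n => integrable_of_abs_le (hm n) (hb n)
  have hmabs : ∀ n, |m n| ≤ B := by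
    intro n
    calc |m n| = ‖∫ ω, X n ω ∂μ‖ := (Real.norm_eq_abs _).symm
      _ ≤ ∫ ω, ‖X n ω‖ ∂μ := norm_integral_le_integral_norm _
      _ = ∫ ω, |X n ω| ∂μ := by simp [Real.norm_eq_abs]
      _ ≤ ∫ (_ : Ω), B ∂μ := integral_mono (hintX n).abs (integrable_const _) (hb n)
      _ = B := by simp
  set s : ℝ := min (ζ / (16 * B ^ 2)) (1 / (2 * B)) with hs_def
  have hs0 : 0 < s := lt_min (by positivity) (by positivity)
  set c : ℝ := s * (2 * B) with hc_def
  have hc0 : 0 < c := by positivity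
  have hc1 : c ≤ 1 := by
    have : s ≤ 1 / (2 * B) := min_le_right _ _
    rw [hc_def]
    calc s * (2 * B) ≤ (1 / (2 * B)) * (2 * B) := by
          apply mul_le_mul_of_nonneg_right this; positivity
      _ = 1 := by field_simp
  have hc2 : c ^ 2 ≤ s * ζ / 4 := by
    have h1 : s ≤ ζ / (16 * B ^ 2) := min_le_left _ _
    have : c ^ 2 = s * (s * (4 * B ^ 2)) := by rw [hc_def]; ring
    rw [this]
    have h2 : s * (4 * B ^ 2) ≤ (ζ / (16 * B ^ 2)) * (4 * B ^ 2) := by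
      apply mul_le_mul_of_nonneg_right h1; positivity
    have h3 : (ζ / (16 * B ^ 2)) * (4 * B ^ 2) = ζ / 4 := by field_simp; ring
    calc s * (s * (4 * B ^ 2)) ≤ s * (ζ / 4) := by
          apply mul_le_mul_of_nonneg_left (h2.trans h3.le) hs0.le
      _ = s * ζ / 4 := by ring
  -- centered exponentials
  set Z : ℕ → Ω → ℝ := fun n ω => -(s * (X n ω - m n)) with hZ_def
  have hZm : ∀ n, Measurable (Z n) := fun n => ((hm n).sub_const _).const_mul s |>.neg
  have hZb : ∀ n ω, |Z n ω| ≤ c := by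
    intro n ω
    rw [hZ_def, hc_def]
    rw [abs_neg, abs_mul, abs_of_pos hs0]
    apply mul_le_mul_of_nonneg_left _ hs0.le
    calc |X n ω - m n| ≤ |X n ω| + |m n| := abs_sub _ _
      _ ≤ B + B := add_le_add (hb n ω) (hmabs n)
      _ = 2 * B := by ring
  have hZ0 : ∀ n, ∫ ω, Z n ω ∂μ = 0 := by
    intro n
    rw [hZ_def]
    simp only
    rw [integral_neg, integral_const_mul _, integral_sub (hintX n) (integrable_const _)]
    simp [hm_def]
  set Y : ℕ → Ω → ℝ := fun n ω => Real.exp (Z n ω) with hY_def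
  have hYm : ∀ n, Measurable (Y n) := fun n => (hZm n).exp
  have hYb : ∀ n ω, |Y n ω| ≤ Real.exp 1 := by
    intro n ω
    rw [hY_def, abs_of_pos (Real.exp_pos _)]
    exact Real.exp_le_exp.mpr ((le_abs_self _).trans ((hZb n ω).trans hc1))
  have hYind : iIndepFun (m := fun _ => (inferInstance : MeasurableSpace ℝ)) Y μ := by
    have : ∀ n, Y n = (fun x => Real.exp (-(s * (x - m n)))) ∘ X n := fun n => rfl
    have := hind.comp (fun n => fun x => Real.exp (-(s * (x - m n))))
      (fun n => ((measurable_id.sub_const _).const_mul s).neg.exp)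
    exact this
  have hYint : ∀ n, ∫ ω, Y n ω ∂μ ≤ Real.exp (s * ζ / 4) := by
    intro n
    calc ∫ ω, Y n ω ∂μ ≤ Real.exp (c ^ 2) := mgf_step (hZm n) (hZb n) hc1 (hZ0 n)
      _ ≤ Real.exp (s * ζ / 4) := Real.exp_le_exp.mpr hc2
  have hprod : ∀ i, ∫ ω, ∏ n ∈ Finset.range i, Y n ω ∂μ ≤ Real.exp ((i : ℝ) * (s * ζ / 4)) := by
    intro i
    rw [integral_prod_range hYm hYind (Real.exp_pos 1).le hYb i]
    calc ∏ n ∈ Finset.range i, ∫ ω, Y n ω ∂μ ≤ ∏ _n ∈ Finset.range i, Real.exp (s * ζ / 4) :=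
          Finset.prod_le_prod (fun n _ => integral_nonneg (fun ω => (Real.exp_pos _).le))
            (fun n _ => hYint n)
      _ = Real.exp (s * ζ / 4) ^ i := by simp
      _ = Real.exp ((i : ℝ) * (s * ζ / 4)) := by rw [← Real.exp_nat_mul]
  -- Markov + Borel-Cantelli
  set A : ℕ → Set Ω := fun i => {ω | Real.exp ((i : ℝ) * (s * ζ / 2)) ≤ ∏ n ∈ Finset.range i, Y n ω}
    with hA_def
  have hprodint : ∀ i, Integrable (fun ω => ∏ n ∈ Finset.range i, Y n ω) μ := by
    intro i
    refine integrable_of_abs_le (by fun_prop) (c := Real.exp 1 ^ i) (fun ω => ?_)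
    calc |∏ n ∈ Finset.range i, Y n ω| = ∏ n ∈ Finset.range i, |Y n ω| := Finset.abs_prod _ _
      _ ≤ ∏ _n ∈ Finset.range i, Real.exp 1 :=
        Finset.prod_le_prod (fun n _ => abs_nonneg _) (fun n _ => hYb n ω)
      _ = Real.exp 1 ^ i := by simp
  have hmarkov : ∀ i, (μ (A i)).toReal ≤ Real.exp (-((i:ℝ) * (s * ζ / 4))) := by
    intro i
    have h1 := mul_meas_ge_le_integral_of_nonneg (μ := μ)
      (f := fun ω => ∏ n ∈ Finset.range i, Y n ω)
      (Filter.Eventually.of_forall (fun ω =>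
        Finset.prod_nonneg (fun n _ => (Real.exp_pos _).le)))
      (hprodint i) (Real.exp ((i : ℝ) * (s * ζ / 2)))
    have h2 : Real.exp ((i:ℝ) * (s * ζ / 2)) * (μ (A i)).toReal ≤
        Real.exp ((i : ℝ) * (s * ζ / 4)) := le_trans h1 (hprod i)
    have h3 : (μ (A i)).toReal ≤
        Real.exp ((i : ℝ) * (s * ζ / 4)) / Real.exp ((i:ℝ) * (s * ζ / 2)) := by
      rw [le_div_iff₀ (Real.exp_pos _)]
      linarith [h2]
    calc (μ (A i)).toReal ≤ _ := h3
      _ = Real.exp (-((i:ℝ) * (s * ζ / 4))) := by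
        rw [← Real.exp_sub]; ring_nf
  have hsum : (∑' i, μ (A i)) ≠ ⊤ := by
    set r : ℝ := Real.exp (-(s * ζ / 4)) with hr_def
    have hr1 : r < 1 := Real.exp_lt_one_iff.mpr (by nlinarith)
    have hr0 : 0 ≤ r := Real.exp_nonneg _
    have hbound : ∀ i, μ (A i) ≤ (ENNReal.ofReal r) ^ i := by
      intro i
      rw [← ENNReal.ofReal_pow hr0]
      rw [ENNReal.le_ofReal_iff_toReal_le (measure_ne_top μ _) (by positivity)]
      calc (μ (A i)).toReal ≤ Real.exp (-((i:ℝ) * (s * ζ / 4))) := hmarkov i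
        _ = r ^ i := by rw [hr_def, ← Real.exp_nat_mul]; ring_nf
    refine ne_top_of_le_ne_top ?_ (ENNReal.tsum_le_tsum hbound)
    rw [ENNReal.tsum_geometric]
    refine ENNReal.inv_ne_top.mpr ?_
    have : ENNReal.ofReal r < 1 := by
      rw [← ENNReal.ofReal_one]
      exact ENNReal.ofReal_lt_ofReal_iff_of_nonneg hr0 |>.mpr hr1
    exact (tsub_pos_of_lt this).ne'
  have hae := ae_eventually_notMem hsum
  filter_upwards [hae] with ω hω
  have hev : ∀ᶠ i : ℕ in atTop, (i : ℝ) * (ζ / 2) ≤ ∑ n ∈ Finset.range i, X n ω := by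
    filter_upwards [hω] with i hi
    rw [hA_def] at hi
    simp only [Set.mem_setOf_eq, not_le] at hi
    have hexp : ∏ n ∈ Finset.range i, Y n ω =
        Real.exp (-(s * ((∑ n ∈ Finset.range i, X n ω) - ∑ n ∈ Finset.range i, m n))) := by
      rw [← Real.exp_sum]
      congr 1
      simp only [hZ_def, Finset.sum_neg_distrib, ← Finset.mul_sum, Finset.sum_sub_distrib]
    rw [hexp] at hi
    have := (Real.exp_lt_exp.mp hi)
    have hM : (i : ℝ) * ζ ≤ ∑ n ∈ Finset.range i, m n := by
      calc (i : ℝ) * ζ = ∑ _n ∈ Finset.range i, ζ := by simp [mul_comm]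
        _ ≤ ∑ n ∈ Finset.range i, m n := Finset.sum_le_sum (fun n _ => hmean n)
    nlinarith [hs0]
  refine tendsto_atTop_mono' atTop hev ?_
  exact (tendsto_natCast_atTop_atTop (R := ℝ)).atTop_mul_const (by positivity)

end Aux

theorem stmt13 {Ω : Type*} [MeasurableSpace Ω] (μ : Measure Ω) [IsProbabilityMeasure μ]
    (H : ℕ) (hY : Fin H) (η ζ Lmax : ℝ) (hη : 0 < η) (hζ : 0 < ζ) (hLmax : 0 < Lmax)
    (L : ℕ → Fin H → Ω → ℝ)
    (hmeas : ∀ i h, Measurable (L i h))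
    (hbd : ∀ i h ω, L i h ω ∈ Set.Icc (0:ℝ) Lmax)
    (hindep : iIndepFun (m := fun _ : ℕ => (inferInstance : MeasurableSpace (Fin H → ℝ)))
      (fun i => fun ω => (fun h => L i h ω)) μ)
    (hmean : ∀ i h, h ≠ hY → (∫ ω, L i hY ω ∂μ) + ζ ≤ ∫ ω, L i h ω ∂μ)
    (t0 : Fin H → ℝ) (h0pos : ∀ h, 0 < t0 h) (h0sum : ∑ h, t0 h = 1)
    (t : ℕ → Fin H → Ω → ℝ)
    (ht : ∀ i h ω, t i h ω =
      t0 h * Real.exp (-η * ∑ n ∈ Finset.range i, L n h ω) /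
        ∑ k, t0 k * Real.exp (-η * ∑ n ∈ Finset.range i, L n k ω)) :
    ∀ᵐ ω ∂μ, Filter.Tendsto (fun i => t i hY ω) Filter.atTop (nhds 1) := by
  -- Step 1: for each h ≠ hY, the gap diverges a.s.
  have key : ∀ h : Fin H, ∀ᵐ ω ∂μ, h ≠ hY →
      Tendsto (fun i => ∑ n ∈ Finset.range i, (L n h ω - L n hY ω)) atTop atTop := by
    intro h
    by_cases hh : h = hY
    · filter_upwards with ω hne; exact absurd hh hne
    · have hX : ∀ᵐ ω ∂μ,
          Tendsto (fun i => ∑ n ∈ Finset.range i, (L n h ω - L n hY ω)) atTop atTop := by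
        apply sum_tendsto_atTop (X := fun n ω => L n h ω - L n hY ω)
          (fun n => (hmeas n h).sub (hmeas n hY)) ?_ hLmax hζ
        · intro n ω
          have h1 := hbd n h ω; have h2 := hbd n hY ω
          rw [abs_le]; constructor <;> [linarith [h1.1, h2.2]; linarith [h1.2, h2.1]]
        · intro n
          have hint : ∀ k, Integrable (L n k) μ := by
            intro k
            refine integrable_of_abs_le (hmeas n k) (c := Lmax) (fun ω => ?_)
            have := hbd n k ω; rw [abs_le]; constructor <;> linarith [this.1, this.2]
          rw [integral_sub (hint h) (hint hY)]
          linarith [hmean n h hh]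
        · have := hindep.comp (fun _ => fun v : Fin H → ℝ => v h - v hY)
            (fun _ => (measurable_pi_apply h).sub (measurable_pi_apply hY))
          exact this
      filter_upwards [hX] with ω hω _; exact hω
  rw [← ae_all_iff] at key
  filter_upwards [key] with ω hω
  -- Step 2: deterministic convergence
  set S : Fin H → ℕ → ℝ := fun k i => ∑ n ∈ Finset.range i, L n k ω with hS_def
  set D : Fin H → ℕ → ℝ := fun k i => S k i - S hY i with hD_def
  have hform : ∀ i, t i hY ω = t0 hY / ∑ k, t0 k * Real.exp (-η * D k i) := by
    intro i
    rw [ht i hY ω]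
    have hsplit : ∀ k, Real.exp (-η * S k i) =
        Real.exp (-η * D k i) * Real.exp (-η * S hY i) := by
      intro k; rw [← Real.exp_add]; congr 1; rw [hD_def]; ring
    have : (∑ k, t0 k * Real.exp (-η * S k i)) =
        (∑ k, t0 k * Real.exp (-η * D k i)) * Real.exp (-η * S hY i) := by
      rw [Finset.sum_mul]
      exact Finset.sum_congr rfl (fun k _ => by rw [hsplit k]; ring
      )
    rw [show (∑ k, t0 k * Real.exp (-η * ∑ n ∈ Finset.range i, L n k ω)) =
        ∑ k, t0 k * Real.exp (-η * S k i) from rfl, this]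
    rw [show Real.exp (-η * ∑ n ∈ Finset.range i, L n hY ω) = Real.exp (-η * S hY i) from rfl]
    rw [mul_div_mul_right _ _ (Real.exp_ne_zero _)]
  have hdenom : Tendsto (fun i => ∑ k, t0 k * Real.exp (-η * D k i)) atTop (nhds (t0 hY)) := by
    have hterm : ∀ k : Fin H, Tendsto (fun i => t0 k * Real.exp (-η * D k i)) atTop
        (nhds (if k = hY then t0 hY else 0)) := by
      intro k
      by_cases hk : k = hY
      · subst hk
        simp only [if_pos rfl]
        have : ∀ i, t0 k * Real.exp (-η * D k i) = t0 k := by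
          intro i; rw [hD_def]; simp
        simp only [this]; exact tendsto_const_nhds
      · simp only [if_neg hk]
        rw [show (0:ℝ) = t0 k * 0 by ring]
        refine Tendsto.const_mul _ ?_
        refine Real.tendsto_exp_atBot.comp ?_
        have hDk : Tendsto (fun i => D k i) atTop atTop := by
          have heq : ∀ i, D k i = ∑ n ∈ Finset.range i, (L n k ω - L n hY ω) := by
            intro i; rw [hD_def, hS_def]; simp [Finset.sum_sub_distrib]
          simp only [heq]; exact hω k hk
        exact hDk.const_mul_atTop_of_neg (neg_neg_iff_pos.mpr hη)
    have := tendsto_finset_sum Finset.univ (fun k _ => hterm k)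
    convert this using 2
    rw [Finset.sum_ite_eq' Finset.univ hY fun _ => t0 hY]
    simp
  have hne : t0 hY ≠ 0 := (h0pos hY).ne'
  have := (tendsto_const_nhds (x := t0 hY) (f := atTop)).div hdenom hne
  rw [div_self hne] at this
  simp only [hform]
  exact this
end
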